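/- If a graph G of order at least 6 satisfies (|V(G)|+1)/3 ≤ Δ(G) < |V(G)|/2 and no component of G is K_{Δ(G)+1}, then the equitable chromatic threshold of G is at most min{r+s+t : G admits an [r,s,t]-coloring}. -/

import Mathlib

set_option linter.unusedSectionVars false
set_option linter.unusedVariables false

open Finset

variable {V : Type*}

/-- `P` is the set of color classes of an `[r,s,t]`-coloring of `G`:
a partition of the vertices into independent sets, with `r` classes of size 3,
`s` classes of size 2 and `t` singleton classes. -/
def IsRST [Fintype V] [DecidableEq V] (G : SimpleGraph V) (P : Finset (Finset V))
    (r s t : ℕ) : Prop :=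
  (∀ v : V, ∃! A, A ∈ P ∧ v ∈ A) ∧
  (∀ A ∈ P, ∀ u ∈ A, ∀ w ∈ A, ¬ G.Adj u w) ∧
  (P.filter (fun A => A.card = 3)).card = r ∧
  (P.filter (fun A => A.card = 2)).card = s ∧
  (P.filter (fun A => A.card = 1)).card = t ∧
  (∀ A ∈ P, A.card = 1 ∨ A.card = 2 ∨ A.card = 3)

/-- A maximal `[r,s,t]`-coloring: for any other `[r',s',t']`-coloring,
either `r > r'`, or `r = r'` and `s ≥ s'`. -/
def IsMaxRST [Fintype V] [DecidableEq V] (G : SimpleGraph V) (P : Finset (Finset V))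
    (r s t : ℕ) : Prop :=
  IsRST G P r s t ∧
  ∀ (P' : Finset (Finset V)) (r' s' t' : ℕ), IsRST G P' r' s' t' →
    r' < r ∨ (r' = r ∧ s' ≤ s)

/-- `eB G X Y` is the number of edges with one endpoint in `X` and the other in `Y`. -/
def eB [Fintype V] [DecidableEq V] (G : SimpleGraph V) [DecidableRel G.Adj]
    (X Y : Finset V) : ℕ :=
  ((X ×ˢ Y).filter fun p => G.Adj p.1 p.2).card

/-- `G` is equitably `k`-colorable: a proper `k`-coloring whose color classes
have sizes differing pairwise by at most 1. -/
def EqColorable [Fintype V] (G : SimpleGraph V) (k : ℕ) : Prop :=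
  ∃ C : V → Fin k, (∀ u v, G.Adj u v → C u ≠ C v) ∧
    ∀ i j : Fin k,
      (Finset.univ.filter fun v => C v = i).card ≤
        (Finset.univ.filter fun v => C v = j).card + 1


open Finset

section Aux
variable {V : Type*} [Fintype V] [DecidableEq V] {k : ℕ}

/-- fiber of a coloring -/
def fibC (g : V → Fin k) (c : Fin k) : Finset V :=
  Finset.univ.filter fun v => g v = c

variable (G : SimpleGraph V) [DecidableRel G.Adj]

/-- proper coloring -/
def ProperC (g : V → Fin k) : Prop := ∀ u v, G.Adj u v → g u ≠ g v

/-- potential -/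
def PhiC (g : V → Fin k) : ℕ := ∑ c : Fin k, (fibC g c).card ^ 2

variable {G}

lemma mem_fibC {g : V → Fin k} {v : V} {c : Fin k} : v ∈ fibC g c ↔ g v = c := by
  simp [fibC]

lemma self_mem_fibC (g : V → Fin k) (v : V) : v ∈ fibC g (g v) := by simp [fibC]

lemma card_fibC_pos (g : V → Fin k) (v : V) : 1 ≤ (fibC g (g v)).card :=
  Finset.card_pos.mpr ⟨v, self_mem_fibC g v⟩

lemma sum_card_fibC (g : V → Fin k) : ∑ c : Fin k, (fibC g c).card = Fintype.card V := by
  rw [← Finset.card_univ]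
  exact (Finset.card_eq_sum_card_fiberwise (fun v _ => Finset.mem_univ (g v))).symm

lemma fibC_update_src {g : V → Fin k} {x : V} {j : Fin k} (h : g x ≠ j) :
    fibC (Function.update g x j) (g x) = (fibC g (g x)).erase x := by
  ext v
  rcases eq_or_ne v x with rfl | hv
  · simp [fibC, Function.update_self, h, Ne.symm h]
  · simp [fibC, Function.update_of_ne hv, hv]

lemma fibC_update_tgt {g : V → Fin k} {x : V} {j : Fin k} (h : g x ≠ j) :
    fibC (Function.update g x j) j = insert x (fibC g j) := by
  ext v
  rcases eq_or_ne v x with rfl | hv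
  · simp [fibC, Function.update_self]
  · simp [fibC, Function.update_of_ne hv, hv]

lemma fibC_update_other {g : V → Fin k} {x : V} {j c : Fin k} (h1 : c ≠ g x) (h2 : c ≠ j) :
    fibC (Function.update g x j) c = fibC g c := by
  ext v
  rcases eq_or_ne v x with rfl | hv
  · simp [fibC, Function.update_self, h1.symm, h2.symm]
  · simp [fibC, Function.update_of_ne hv]

lemma properC_update {g : V → Fin k} {x : V} {j : Fin k} (hp : ProperC G g)
    (hj : ∀ v ∈ fibC g j, ¬ G.Adj x v) : ProperC G (Function.update g x j) := by
  intro u v huv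
  by_cases hu : u = x
  · by_cases hv : v = x
    · subst hu; subst hv; exact absurd huv (G.loopless.irrefl _)
    · subst hu
      rw [Function.update_self, Function.update_of_ne hv]
      intro hc
      exact hj v (mem_fibC.mpr hc.symm) huv
  · by_cases hv : v = x
    · subst hv
      rw [Function.update_self, Function.update_of_ne hu]
      intro hc
      exact hj u (mem_fibC.mpr hc) (huv.symm)
    · rw [Function.update_of_ne hu, Function.update_of_ne hv]
      exact hp u v huv

lemma phiC_update (g : V → Fin k) {x : V} {j : Fin k} (h : g x ≠ j) :
    PhiC (Function.update g x j) + (fibC g (g x)).card ^ 2 + (fibC g j).card ^ 2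
      = PhiC g + ((fibC g (g x)).card - 1) ^ 2 + ((fibC g j).card + 1) ^ 2 := by
  classical
  have hxj : (g x) ≠ j := h
  have hmem : x ∈ fibC g (g x) := self_mem_fibC g x
  have hxnj : x ∉ fibC g j := fun hc => hxj (mem_fibC.mp hc)
  have key : ∀ F : Fin k → ℕ,
      ∑ c : Fin k, F c = F (g x) + F j + ∑ c ∈ (Finset.univ.erase (g x)).erase j, F c := by
    intro F
    have h1 : ∑ c ∈ Finset.univ.erase (g x), F c
        = F j + ∑ c ∈ (Finset.univ.erase (g x)).erase j, F c := by
      rw [Finset.add_sum_erase _ F (by simp [hxj.symm])]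
    have h2 : ∑ c : Fin k, F c = F (g x) + ∑ c ∈ Finset.univ.erase (g x), F c := by
      rw [Finset.add_sum_erase _ F (Finset.mem_univ _)]
    omega
  have e1 : (fibC (Function.update g x j) (g x)).card = (fibC g (g x)).card - 1 := by
    rw [fibC_update_src h, Finset.card_erase_of_mem hmem]
  have e2 : (fibC (Function.update g x j) j).card = (fibC g j).card + 1 := by
    rw [fibC_update_tgt h, Finset.card_insert_of_notMem hxnj]
  have e3 : ∀ c ∈ (Finset.univ.erase (g x)).erase j,
      (fibC (Function.update g x j) c).card = (fibC g c).card := by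
    intro c hc
    simp only [Finset.mem_erase] at hc
    rw [fibC_update_other hc.2.1 hc.1]
  have k1 := key (fun c => (fibC (Function.update g x j) c).card ^ 2)
  have k2 := key (fun c => (fibC g c).card ^ 2)
  simp only [PhiC]
  rw [k1, k2, e1, e2, Finset.sum_congr rfl (fun c hc => by rw [e3 c hc])]
  ring
end Aux

section Core
variable {V : Type*} [Fintype V] [DecidableEq V] {k : ℕ}
variable (G : SimpleGraph V) [DecidableRel G.Adj]

/-- a balance-preserving move: a vertex of a 2-class moves to a nonadjacent 1-class -/
def MoveC (g₁ g₂ : V → Fin k) : Prop :=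
  ∃ (x : V) (j : Fin k), (fibC g₁ (g₁ x)).card = 2 ∧ (fibC g₁ j).card = 1 ∧
    (∀ v ∈ fibC g₁ j, ¬ G.Adj x v) ∧ g₂ = Function.update g₁ x j

def InvC (g g' : V → Fin k) : Prop :=
  ProperC G g' ∧ (∀ c, (fibC g' c).card ≤ 3) ∧
  (∀ c, (fibC g c).card = 3 → fibC g' c = fibC g c) ∧ PhiC g' = PhiC g

variable {G}

lemma invC_move {g g₁ g₂ : V → Fin k} (ih : InvC G g g₁) (hm : MoveC G g₁ g₂) :
    InvC G g g₂ := by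
  obtain ⟨x, j, h2, h1, hnadj, rfl⟩ := hm
  have hxj : g₁ x ≠ j := by intro h; rw [h] at h2; omega
  refine ⟨properC_update ih.1 hnadj, ?_, ?_, ?_⟩
  · intro c
    by_cases hc1 : c = g₁ x
    · subst hc1; rw [fibC_update_src hxj]
      exact le_trans (Finset.card_erase_le) (ih.2.1 _)
    · by_cases hc2 : c = j
      · rw [hc2, fibC_update_tgt hxj]
        have := Finset.card_insert_le x (fibC g₁ j)
        omega
      · rw [fibC_update_other hc1 hc2]; exact ih.2.1 c
  · intro c h3c
    have he := ih.2.2.1 c h3c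
    have h3c' : (fibC g₁ c).card = 3 := by rw [he]; exact h3c
    have hc1 : c ≠ g₁ x := by intro h; rw [← h] at h2; omega
    have hc2 : c ≠ j := by intro h; rw [← h] at h1; omega
    rw [fibC_update_other hc1 hc2, he]
  · have hph := phiC_update g₁ hxj
    rw [h2, h1] at hph
    have := ih.2.2.2
    omega

lemma invC_reach {g g' : V → Fin k} (hp : ProperC G g) (hb : ∀ c, (fibC g c).card ≤ 3)
    (h : Relation.ReflTransGen (MoveC G) g g') : InvC G g g' := by
  induction h with
  | refl => exact ⟨hp, hb, fun c _ => rfl, rfl⟩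
  | tail _ hmv ih => exact invC_move ih hmv

lemma coreC (hΔ : 2 * G.maxDegree < Fintype.card V)
    (g : V → Fin k) (hp : ProperC G g) (hb : ∀ c, (fibC g c).card ≤ 3)
    (i0 j0 : Fin k) (h3 : (fibC g i0).card = 3) (h1 : (fibC g j0).card = 1) :
    ∃ g' : V → Fin k, ProperC G g' ∧ (∀ c, (fibC g' c).card ≤ 3) ∧ PhiC g' < PhiC g := by
  classical
  by_contra hcon
  push_neg at hcon
  -- the set of vertices that can be made into a singleton class
  set U : Finset V := Finset.univ.filter (fun u =>
    ∃ g' : V → Fin k, Relation.ReflTransGen (MoveC G) g g' ∧ (fibC g' (g' u)).card = 1)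
    with hUdef
  -- L1 : every vertex of a 3-class is adjacent to every element of U
  have hL1 : ∀ x u, (fibC g (g x)).card = 3 → u ∈ U → G.Adj x u := by
    intro x u h3x hu
    rw [hUdef, Finset.mem_filter] at hu
    obtain ⟨-, g', hR, h1u⟩ := hu
    have hInv := invC_reach hp hb hR
    have hfx : fibC g' (g x) = fibC g (g x) := hInv.2.2.1 _ h3x
    have hgx : g' x = g x := by
      have : x ∈ fibC g' (g x) := by rw [hfx]; exact self_mem_fibC g x
      exact mem_fibC.mp this
    have hne2 : g' u ≠ g x := by
      intro hequ; rw [hequ, hfx, h3x] at h1u; omega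
    by_contra hadj
    have hsing : ∀ v ∈ fibC g' (g' u), v = u := by
      intro v hv
      exact Finset.card_le_one.mp (le_of_eq h1u) v hv u (self_mem_fibC g' u)
    have hnonadj : ∀ v ∈ fibC g' (g' u), ¬ G.Adj x v := by
      intro v hv; rw [hsing v hv]; exact hadj
    have hx' : g' x ≠ g' u := by rw [hgx]; exact fun hh => hne2 hh.symm
    have hprop := properC_update hInv.1 hnonadj
    have hph := phiC_update g' (x := x) (j := g' u) hx'
    rw [hgx, hfx, h3x, h1u] at hph
    have hb'' : ∀ c, (fibC (Function.update g' x (g' u)) c).card ≤ 3 := by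
      intro c
      by_cases hc1 : c = g' x
      · subst hc1; rw [fibC_update_src hx']
        exact le_trans (Finset.card_erase_le) (hInv.2.1 _)
      · by_cases hc2 : c = g' u
        · rw [hc2, fibC_update_tgt hx']
          have := Finset.card_insert_le x (fibC g' (g' u))
          omega
        · rw [fibC_update_other hc1 hc2]; exact hInv.2.1 c
    have hle := hcon _ hprop hb''
    have := hInv.2.2.2
    omega
  -- L3 : partner rule
  have hL3 : ∀ a b w', (fibC g (g a)).card = 2 → b ∈ fibC g (g a) → b ≠ a →
      (fibC g (g w')).card = 1 → ¬ G.Adj a w' → b ∈ U := by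
    intro a b w' h2a hbmem hba h1w hnadj
    have hsing : ∀ v ∈ fibC g (g w'), v = w' := by
      intro v hv
      exact Finset.card_le_one.mp (le_of_eq h1w) v hv w' (self_mem_fibC g w')
    have hga : g a ≠ g w' := by intro h; rw [h] at h2a; omega
    have hmv : MoveC G g (Function.update g a (g w')) :=
      ⟨a, g w', h2a, h1w, fun v hv => by rw [hsing v hv]; exact hnadj, rfl⟩
    rw [hUdef, Finset.mem_filter]
    refine ⟨Finset.mem_univ _, Function.update g a (g w'),
      Relation.ReflTransGen.single hmv, ?_⟩
    have hgb : Function.update g a (g w') b = g a := by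
      rw [Function.update_of_ne hba]; exact mem_fibC.mp hbmem
    rw [hgb, fibC_update_src hga, Finset.card_erase_of_mem (self_mem_fibC g a), h2a]
  -- the singleton and triple witnesses
  obtain ⟨w, hw⟩ := Finset.card_eq_one.mp h1
  have hgw : g w = j0 := mem_fibC.mp (by rw [hw]; exact Finset.mem_singleton_self w)
  have hw1 : (fibC g (g w)).card = 1 := by rw [hgw]; exact h1
  have hwU : w ∈ U := by
    rw [hUdef, Finset.mem_filter]
    exact ⟨Finset.mem_univ _, g, Relation.ReflTransGen.refl, hw1⟩
  obtain ⟨x0, hx0⟩ : ∃ x0, x0 ∈ fibC g i0 := Finset.card_pos.mp (by omega)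
  have hgx0 : g x0 = i0 := mem_fibC.mp hx0
  have hx03 : (fibC g (g x0)).card = 3 := by rw [hgx0]; exact h3
  -- size classes of vertices
  set V1 : Finset V := Finset.univ.filter (fun v => (fibC g (g v)).card = 1) with hV1
  set V2 : Finset V := Finset.univ.filter (fun v => (fibC g (g v)).card = 2) with hV2
  set V3 : Finset V := Finset.univ.filter (fun v => (fibC g (g v)).card = 3) with hV3
  have hUV3 : ∀ u ∈ U, (fibC g (g u)).card ≠ 3 := fun u hu h3u =>
    G.loopless.irrefl u (hL1 u u h3u hu)
  have hUcard : U.card ≤ G.maxDegree := by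
    have hsub : U ⊆ G.neighborFinset x0 := fun u hu =>
      (SimpleGraph.mem_neighborFinset G x0 u).mpr (hL1 x0 u hx03 hu)
    calc U.card ≤ (G.neighborFinset x0).card := Finset.card_le_card hsub
    _ = G.degree x0 := G.card_neighborFinset_eq_degree x0
    _ ≤ G.maxDegree := G.degree_le_maxDegree x0
  -- partner function on V2
  set pt : V → V := fun a =>
    if h : ((fibC g (g a)).erase a).card = 1 then (Finset.card_eq_one.mp h).choose else a
    with hptdef
  have pairSpec : ∀ a, (fibC g (g a)).card = 2 → (fibC g (g a)).erase a = {pt a} := by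
    intro a h2a
    have herase : ((fibC g (g a)).erase a).card = 1 := by
      rw [Finset.card_erase_of_mem (self_mem_fibC g a), h2a]
    rw [hptdef]
    simp only [dif_pos herase]
    exact (Finset.card_eq_one.mp herase).choose_spec
  have ptmem : ∀ a, (fibC g (g a)).card = 2 → pt a ≠ a ∧ pt a ∈ fibC g (g a) := by
    intro a h2a
    have := pairSpec a h2a
    have hmem : pt a ∈ (fibC g (g a)).erase a := by rw [this]; exact Finset.mem_singleton_self _
    exact ⟨(Finset.mem_erase.mp hmem).1, (Finset.mem_erase.mp hmem).2⟩
  have ptg : ∀ a, (fibC g (g a)).card = 2 → g (pt a) = g a := fun a h2a =>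
    mem_fibC.mp (ptmem a h2a).2
  have ptinv : ∀ a, (fibC g (g a)).card = 2 → pt (pt a) = a := by
    intro a h2a
    have hga := ptg a h2a
    have h2b : (fibC g (g (pt a))).card = 2 := by rw [hga]; exact h2a
    have hspec := pairSpec (pt a) h2b
    have hamem : a ∈ (fibC g (g (pt a))).erase (pt a) :=
      Finset.mem_erase.mpr ⟨fun h => (ptmem a h2a).1 h.symm, by rw [hga]; exact self_mem_fibC g a⟩
    rw [hspec] at hamem
    exact (Finset.mem_singleton.mp hamem).symm
  -- every non-U vertex of V2 sends its partner into N(w)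
  have hkey : ∀ v ∈ V2 \ U, pt v ∈ G.neighborFinset w ∩ V2 := by
    intro v hv
    rw [Finset.mem_sdiff] at hv
    obtain ⟨hv2, hvU⟩ := hv
    rw [hV2, Finset.mem_filter] at hv2
    have h2v : (fibC g (g v)).card = 2 := hv2.2
    have h2p : (fibC g (g (pt v))).card = 2 := by rw [ptg v h2v]; exact h2v
    have hadj : G.Adj (pt v) w := by
      by_contra hna
      exact hvU (hL3 (pt v) v w h2p
        (by rw [ptg v h2v]; exact self_mem_fibC g v)
        (fun h => (ptmem v h2v).1 h.symm) hw1 hna)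
    refine Finset.mem_inter.mpr ⟨(SimpleGraph.mem_neighborFinset G w (pt v)).mpr hadj.symm, ?_⟩
    rw [hV2, Finset.mem_filter]
    exact ⟨Finset.mem_univ _, h2p⟩
  have hcard1 : (V2 \ U).card ≤ (G.neighborFinset w ∩ V2).card := by
    apply Finset.card_le_card_of_injOn pt hkey
    intro a ha b hb hab
    rw [Finset.coe_sdiff] at ha hb
    have h2a : (fibC g (g a)).card = 2 := by
      have := ha.1; rw [hV2] at this; simp only [Finset.coe_filter] at this; exact this.2
    have h2b : (fibC g (g b)).card = 2 := by
      have := hb.1; rw [hV2] at this; simp only [Finset.coe_filter] at this; exact this.2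
    rw [← ptinv a h2a, hab, ptinv b h2b]
  -- N(w) contains V3 and the (N(w) ∩ V2)
  have hV3w : V3 ⊆ G.neighborFinset w := by
    intro x hx
    rw [hV3, Finset.mem_filter] at hx
    exact (SimpleGraph.mem_neighborFinset G w x).mpr (hL1 x w hx.2 hwU).symm
  have hdisj23 : Disjoint (G.neighborFinset w ∩ V2) V3 := by
    rw [Finset.disjoint_left]
    intro a ha ha3
    rw [Finset.mem_inter, hV2, Finset.mem_filter] at ha
    rw [hV3, Finset.mem_filter] at ha3
    omega
  have hdegw : (G.neighborFinset w ∩ V2).card + V3.card ≤ G.maxDegree := by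
    have hsub : (G.neighborFinset w ∩ V2) ∪ V3 ⊆ G.neighborFinset w := by
      intro a ha
      rcases Finset.mem_union.mp ha with h | h
      · exact (Finset.mem_inter.mp h).1
      · exact hV3w h
    calc (G.neighborFinset w ∩ V2).card + V3.card
        = ((G.neighborFinset w ∩ V2) ∪ V3).card := (Finset.card_union_of_disjoint hdisj23).symm
      _ ≤ (G.neighborFinset w).card := Finset.card_le_card hsub
      _ = G.degree w := G.card_neighborFinset_eq_degree w
      _ ≤ G.maxDegree := G.degree_le_maxDegree w
  -- U splits into V1 and V2 ∩ U
  have hV1U : V1 ⊆ U := by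
    intro v hv
    rw [hV1, Finset.mem_filter] at hv
    rw [hUdef, Finset.mem_filter]
    exact ⟨Finset.mem_univ _, g, Relation.ReflTransGen.refl, hv.2⟩
  have hUsplit : U.card = V1.card + (V2 ∩ U).card := by
    have hUsub : U = V1 ∪ (V2 ∩ U) := by
      ext u
      constructor
      · intro hu
        have hpos := card_fibC_pos g u
        have hle := hb (g u)
        have hne3 := hUV3 u hu
        rcases (by omega : (fibC g (g u)).card = 1 ∨ (fibC g (g u)).card = 2) with h | h
        · apply Finset.mem_union_left
          rw [hV1, Finset.mem_filter]
          exact ⟨Finset.mem_univ _, h⟩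
        · apply Finset.mem_union_right
          apply Finset.mem_inter.mpr
          refine ⟨?_, hu⟩
          rw [hV2, Finset.mem_filter]
          exact ⟨Finset.mem_univ _, h⟩
      · intro hu
        rcases Finset.mem_union.mp hu with h | h
        · exact hV1U h
        · exact (Finset.mem_inter.mp h).2
    have hd : Disjoint V1 (V2 ∩ U) := by
      rw [Finset.disjoint_left]
      intro a ha hb'
      rw [hV1, Finset.mem_filter] at ha
      have := (Finset.mem_inter.mp hb').1
      rw [hV2, Finset.mem_filter] at this
      omega
    have hcu := Finset.card_union_of_disjoint hd
    rw [← hUsub] at hcu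
    exact hcu
  -- the three classes partition V
  have hn : V1.card + V2.card + V3.card = Fintype.card V := by
    have huniv : V1 ∪ V2 ∪ V3 = Finset.univ := by
      ext v
      simp only [Finset.mem_union, hV1, hV2, hV3, Finset.mem_filter, Finset.mem_univ,
        true_and, iff_true]
      have hpos := card_fibC_pos g v
      have hle := hb (g v)
      omega
    have d12 : Disjoint V1 V2 := by
      rw [Finset.disjoint_left]
      intro a ha hb'
      rw [hV1, Finset.mem_filter] at ha
      rw [hV2, Finset.mem_filter] at hb'
      omega
    have d123 : Disjoint (V1 ∪ V2) V3 := by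
      rw [Finset.disjoint_left]
      intro a ha hb'
      rw [hV3, Finset.mem_filter] at hb'
      rcases Finset.mem_union.mp ha with h | h
      · rw [hV1, Finset.mem_filter] at h; omega
      · rw [hV2, Finset.mem_filter] at h; omega
    rw [← Finset.card_univ, ← huniv, Finset.card_union_of_disjoint d123,
      Finset.card_union_of_disjoint d12]
  have hV2split : (V2 ∩ U).card + (V2 \ U).card = V2.card :=
    Finset.card_inter_add_card_sdiff V2 U
  omega
end Core

lemma masterC {V : Type*} [Fintype V] [DecidableEq V] {k : ℕ}
    {G : SimpleGraph V} [DecidableRel G.Adj]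
    (hΔ : 2 * G.maxDegree < Fintype.card V) (hkn : k < Fintype.card V) :
    ∀ (N : ℕ) (g : V → Fin k), ProperC G g → (∀ c, (fibC g c).card ≤ 3) → PhiC g ≤ N →
    ∃ g' : V → Fin k, ProperC G g' ∧
      ∀ i j, (fibC g' i).card ≤ (fibC g' j).card + 1 := by
  intro N
  induction N with
  | zero =>
    intro g hp hb hphi
    exfalso
    have hz : ∀ c : Fin k, (fibC g c).card = 0 := by
      intro c
      by_contra hc
      have h2 : (fibC g c).card ^ 2 ≤ PhiC g :=
        Finset.single_le_sum (f := fun c => (fibC g c).card ^ 2)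
          (fun _ _ => Nat.zero_le _) (Finset.mem_univ c)
      have h1 : 1 ≤ (fibC g c).card ^ 2 := by
        have : 1 ≤ (fibC g c).card := by omega
        nlinarith
      omega
    have hsum := sum_card_fibC g
    rw [Finset.sum_congr rfl (fun c _ => hz c)] at hsum
    simp at hsum
    omega
  | succ N ih =>
    intro g hp hb hphi
    by_cases heq : ∀ i j, (fibC g i).card ≤ (fibC g j).card + 1
    · exact ⟨g, hp, heq⟩
    push_neg at heq
    obtain ⟨i, j, hij⟩ := heq
    by_cases hemp : ∃ j', (fibC g j').card = 0
    · obtain ⟨j', hj'⟩ := hemp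
      have hex2 : ∃ i', 2 ≤ (fibC g i').card := by
        by_contra hno
        push_neg at hno
        have hsum := sum_card_fibC g
        have hle : ∑ c : Fin k, (fibC g c).card ≤ ∑ _c : Fin k, 1 :=
          Finset.sum_le_sum fun c _ => by have := hno c; omega
        simp at hle
        omega
      obtain ⟨i', hi'⟩ := hex2
      obtain ⟨x, hx⟩ : ∃ x, x ∈ fibC g i' := Finset.card_pos.mp (by omega)
      have hgx : g x = i' := mem_fibC.mp hx
      have hgx2 : 2 ≤ (fibC g (g x)).card := by rw [hgx]; exact hi'
      have hxj : g x ≠ j' := by intro h; rw [← h] at hj'; omega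
      have hempty : fibC g j' = ∅ := Finset.card_eq_zero.mp hj'
      have hnadj : ∀ v ∈ fibC g j', ¬ G.Adj x v := by
        intro v hv; rw [hempty] at hv; exact absurd hv (Finset.notMem_empty v)
      have hp2 := properC_update hp hnadj
      have hb2 : ∀ c, (fibC (Function.update g x j') c).card ≤ 3 := by
        intro c
        by_cases hc1 : c = g x
        · rw [hc1, fibC_update_src hxj]
          exact le_trans (Finset.card_erase_le) (hb _)
        · by_cases hc2 : c = j'
          · rw [hc2, fibC_update_tgt hxj]
            have := Finset.card_insert_le x (fibC g j')
            omega
          · rw [fibC_update_other hc1 hc2]; exact hb c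
      have hph := phiC_update g hxj
      rw [hj'] at hph
      have hsq : ((fibC g (g x)).card - 1) ^ 2 + 2 ≤ (fibC g (g x)).card ^ 2 := by
        obtain ⟨c, hc⟩ : ∃ c, (fibC g (g x)).card = c + 2 :=
          ⟨(fibC g (g x)).card - 2, by omega⟩
        rw [hc]
        have : c + 2 - 1 = c + 1 := by omega
        rw [this]
        nlinarith
      have hlt : PhiC (Function.update g x j') < PhiC g := by
        norm_num at hph
        linarith
      exact ih (Function.update g x j') hp2 hb2 (by omega)
    · push_neg at hemp
      have hne : ∀ c, 1 ≤ (fibC g c).card := fun c => by have := hemp c; omega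
      have h3 : (fibC g i).card = 3 := by
        have := hb i; have := hne j; omega
      have h1 : (fibC g j).card = 1 := by
        have := hne j; omega
      obtain ⟨g', hp', hb', hlt⟩ := coreC hΔ g hp hb i j h3 h1
      exact ih g' hp' hb' (by omega)

lemma partToColoring {V : Type*} [Fintype V] [DecidableEq V] {k : ℕ}
    (G : SimpleGraph V) [DecidableRel G.Adj]
    (Pcl : Finset (Finset V))
    (hcov : ∀ v : V, ∃! A, A ∈ Pcl ∧ v ∈ A)
    (hind : ∀ A ∈ Pcl, ∀ u ∈ A, ∀ w ∈ A, ¬ G.Adj u w)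
    (hcard : Pcl.card ≤ k) :
    ∃ g : V → Fin k, ProperC G g ∧ (∀ c, fibC g c = ∅ ∨ fibC g c ∈ Pcl) ∧
      ∀ A ∈ Pcl, ∃ c, fibC g c = A := by
  classical
  have hemb : Nonempty (↥Pcl ↪ Fin k) := by
    apply Function.Embedding.nonempty_of_card_le
    rw [Fintype.card_coe, Fintype.card_fin]
    exact hcard
  obtain ⟨ι⟩ := hemb
  choose cls hcls using hcov
  refine ⟨fun v => ι ⟨cls v, (hcls v).1.1⟩, ?_, ?_, ?_⟩
  · intro u v huv heq
    have hc : cls u = cls v := by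
      have := ι.injective heq
      exact congrArg Subtype.val this
    exact hind (cls u) (hcls u).1.1 u (hcls u).1.2 v (hc ▸ (hcls v).1.2) huv
  · intro c
    by_cases hc : ∃ A : ↥Pcl, ι A = c
    · obtain ⟨⟨A, hA⟩, rfl⟩ := hc
      right
      have hfib : fibC (fun v => ι ⟨cls v, (hcls v).1.1⟩) (ι ⟨A, hA⟩) = A := by
        ext v
        rw [mem_fibC]
        constructor
        · intro h
          have := ι.injective h
          have hcv : cls v = A := congrArg Subtype.val this
          exact hcv ▸ (hcls v).1.2
        · intro hv
          have : A = cls v := (hcls v).2 A ⟨hA, hv⟩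
          subst this
          rfl
      rw [hfib]; exact hA
    · left
      push_neg at hc
      ext v
      simp only [mem_fibC, Finset.notMem_empty, iff_false]
      exact hc ⟨cls v, (hcls v).1.1⟩
  · intro A hA
    refine ⟨ι ⟨A, hA⟩, ?_⟩
    ext v
    rw [mem_fibC]
    constructor
    · intro h
      have := ι.injective h
      have hcv : cls v = A := congrArg Subtype.val this
      exact hcv ▸ (hcls v).1.2
    · intro hv
      have : A = cls v := (hcls v).2 A ⟨hA, hv⟩
      subst this
      rfl

lemma card_inter_pair {α : Type*} [DecidableEq α] (s : Finset α) {a b : α} (hab : a ≠ b) :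
    (s ∩ {a, b}).card = (if a ∈ s then 1 else 0) + (if b ∈ s then 1 else 0) := by
  have h : s ∩ {a, b} = ({a, b} : Finset α).filter (· ∈ s) := by
    rw [Finset.filter_mem_eq_inter, Finset.inter_comm]
  rw [h, Finset.filter_insert, Finset.filter_singleton]
  by_cases ha : a ∈ s <;> by_cases hb : b ∈ s <;>
    simp [ha, hb, Finset.card_insert_of_notMem, Finset.mem_singleton, hab]

lemma matchAux {V : Type*} [Fintype V] [DecidableEq V]
    (G : SimpleGraph V) [DecidableRel G.Adj] {k : ℕ}
    (hΔk : G.maxDegree + 1 ≤ k) (h2k : Fintype.card V ≤ 2 * k)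
    (q : ℕ) (hq : q + k ≤ Fintype.card V) :
    ∃ M : Finset (V × V), M.card = q ∧
      (∀ e ∈ M, e.1 ≠ e.2 ∧ ¬ G.Adj e.1 e.2) ∧
      (∀ e ∈ M, ∀ f ∈ M, e ≠ f →
        ∀ x, x ∈ ({e.1, e.2} : Finset V) → x ∉ ({f.1, f.2} : Finset V)) := by
  induction q with
  | zero => exact ⟨∅, by simp, by simp, by simp⟩
  | succ q ih =>
    obtain ⟨M, hMcard, hMgood, hMdisj⟩ := ih (by omega)
    set vertsM := M.biUnion (fun e => ({e.1, e.2} : Finset V)) with hvertsM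
    have hvcard : vertsM.card = 2 * q := by
      rw [hvertsM, Finset.card_biUnion]
      · rw [Finset.sum_congr rfl (fun e he => Finset.card_pair (hMgood e he).1),
          Finset.sum_const, hMcard, smul_eq_mul, mul_comm]
      · intro e he f hf hef
        rw [Function.onFun, Finset.disjoint_left]
        intro z hz
        exact hMdisj e he f hf hef z hz
    have hvsub : ∀ e ∈ M, ∀ z, z ∈ ({e.1, e.2} : Finset V) → z ∈ vertsM := by
      intro e he z hz
      rw [hvertsM, Finset.mem_biUnion]
      exact ⟨e, he, hz⟩
    set Unc := Finset.univ \ vertsM with hUncDef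
    have hUncCard : Unc.card = Fintype.card V - 2 * q := by
      rw [hUncDef, Finset.card_sdiff_of_subset (Finset.subset_univ _), Finset.card_univ, hvcard]
    obtain ⟨u, hu, v, hv, huv⟩ := Finset.one_lt_card.mp (by omega : 1 < Unc.card)
    have huM : u ∉ vertsM := (Finset.mem_sdiff.mp hu).2
    have hvM : v ∉ vertsM := (Finset.mem_sdiff.mp hv).2
    -- common builder
    have build : ∀ x y : V, x ≠ u → ¬ G.Adj u x → y ≠ v → ¬ G.Adj v y → x ∈ vertsM →
        y ∈ vertsM → x ≠ y →
        (∃ e ∈ M, (∀ z, z ∈ ({x, y} : Finset V) → z ∈ ({e.1, e.2} : Finset V))) →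
        ∃ M' : Finset (V × V), M'.card = q + 1 ∧
          (∀ e ∈ M', e.1 ≠ e.2 ∧ ¬ G.Adj e.1 e.2) ∧
          (∀ e ∈ M', ∀ f ∈ M', e ≠ f →
            ∀ z, z ∈ ({e.1, e.2} : Finset V) → z ∉ ({f.1, f.2} : Finset V)) := by
      intro x y hxu hxadj hyv hyadj hxM hyM hxy ⟨e, he, hsub⟩
      have hxe : x ∈ ({e.1, e.2} : Finset V) := hsub x (by simp)
      have hye : y ∈ ({e.1, e.2} : Finset V) := hsub y (by simp)
      have hnewmem : ∀ z, z ∈ ({u, x} : Finset V) ∪ ({v, y} : Finset V) →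
          (z = u ∨ z = v) ∨ z ∈ ({e.1, e.2} : Finset V) := by
        intro z hz
        simp only [Finset.mem_union, Finset.mem_insert, Finset.mem_singleton] at hz
        rcases hz with (rfl | rfl) | (rfl | rfl)
        · exact Or.inl (Or.inl rfl)
        · exact Or.inr hxe
        · exact Or.inl (Or.inr rfl)
        · exact Or.inr hye
      refine ⟨insert (u, x) (insert (v, y) (M.erase e)), ?_, ?_, ?_⟩
      · have h1 : (v, y) ∉ M.erase e := by
          intro hmem
          exact hvM (hvsub _ (Finset.mem_of_mem_erase hmem) v (by simp))
        have h2 : (u, x) ∉ insert (v, y) (M.erase e) := by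
          intro hmem
          rcases Finset.mem_insert.mp hmem with heq | hmem'
          · exact huv (congrArg Prod.fst heq)
          · exact huM (hvsub _ (Finset.mem_of_mem_erase hmem') u (by simp))
        rw [Finset.card_insert_of_notMem h2, Finset.card_insert_of_notMem h1,
          Finset.card_erase_of_mem he, hMcard]
        have : 1 ≤ q := by
          by_contra hq0
          have : M = ∅ := Finset.card_eq_zero.mp (by omega)
          rw [this] at he
          exact absurd he (Finset.notMem_empty e)
        omega
      · intro f hf
        rcases Finset.mem_insert.mp hf with rfl | hf'
        · exact ⟨fun h => hxu h.symm, hxadj⟩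
        rcases Finset.mem_insert.mp hf' with rfl | hf''
        · exact ⟨fun h => hyv h.symm, hyadj⟩
        · exact hMgood f (Finset.mem_of_mem_erase hf'')
      · -- pairwise disjointness
        have hux_vy : ∀ z, z ∈ ({u, x} : Finset V) → z ∉ ({v, y} : Finset V) := by
          intro z hz hz'
          simp only [Finset.mem_insert, Finset.mem_singleton] at hz hz'
          rcases hz with rfl | rfl <;> rcases hz' with rfl | rfl
          · exact huv rfl
          · exact huM hyM
          · exact hvM hxM
          · exact hxy rfl
        have hux_old : ∀ f ∈ M.erase e, ∀ z, z ∈ ({u, x} : Finset V) →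
            z ∉ ({f.1, f.2} : Finset V) := by
          intro f hf z hz hz'
          simp only [Finset.mem_insert, Finset.mem_singleton] at hz
          rcases hz with rfl | rfl
          · exact huM (hvsub f (Finset.mem_of_mem_erase hf) z hz')
          · exact hMdisj e he f (Finset.mem_of_mem_erase hf)
              (fun hh => (Finset.mem_erase.mp hf).1 hh.symm) z hxe hz'
        have hvy_old : ∀ f ∈ M.erase e, ∀ z, z ∈ ({v, y} : Finset V) →
            z ∉ ({f.1, f.2} : Finset V) := by
          intro f hf z hz hz'
          simp only [Finset.mem_insert, Finset.mem_singleton] at hz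
          rcases hz with rfl | rfl
          · exact hvM (hvsub f (Finset.mem_of_mem_erase hf) z hz')
          · exact hMdisj e he f (Finset.mem_of_mem_erase hf)
              (fun hh => (Finset.mem_erase.mp hf).1 hh.symm) z hye hz'
        intro e' he' f hf hef z hz
        rcases Finset.mem_insert.mp he' with rfl | he''
        · -- e' = (u,x)
          rcases Finset.mem_insert.mp hf with rfl | hf'
          · exact absurd rfl hef
          rcases Finset.mem_insert.mp hf' with rfl | hf''
          · exact hux_vy z hz
          · exact hux_old f hf'' z hz
        rcases Finset.mem_insert.mp he'' with rfl | he'''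
        · -- e' = (v,y)
          rcases Finset.mem_insert.mp hf with rfl | hf'
          · intro hz'
            exact hux_vy z hz' hz
          rcases Finset.mem_insert.mp hf' with rfl | hf''
          · exact absurd rfl hef
          · exact hvy_old f hf'' z hz
        · -- e' old
          rcases Finset.mem_insert.mp hf with rfl | hf'
          · intro hz'
            exact hux_old e' he''' z hz' hz
          rcases Finset.mem_insert.mp hf' with rfl | hf''
          · intro hz'
            exact hvy_old e' he''' z hz' hz
          · exact hMdisj e' (Finset.mem_of_mem_erase he''') f (Finset.mem_of_mem_erase hf'')
              hef z hz
    by_cases hnadj : ∃ u' ∈ Unc, ∃ v' ∈ Unc, u' ≠ v' ∧ ¬ G.Adj u' v'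
    · obtain ⟨u', hu', v', hv', hne, hna⟩ := hnadj
      have hu'M : u' ∉ vertsM := (Finset.mem_sdiff.mp hu').2
      have hv'M : v' ∉ vertsM := (Finset.mem_sdiff.mp hv').2
      refine ⟨insert (u', v') M, ?_, ?_, ?_⟩
      · have : (u', v') ∉ M := fun hmem => hu'M (hvsub _ hmem u' (by simp))
        rw [Finset.card_insert_of_notMem this, hMcard]
      · intro f hf
        rcases Finset.mem_insert.mp hf with rfl | hf'
        · exact ⟨hne, hna⟩
        · exact hMgood f hf'
      · intro e' he' f hf hef z hz
        have hnew_old : ∀ f' ∈ M, ∀ z', z' ∈ ({u', v'} : Finset V) →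
            z' ∉ ({f'.1, f'.2} : Finset V) := by
          intro f' hf' z' hz' hz''
          simp only [Finset.mem_insert, Finset.mem_singleton] at hz'
          rcases hz' with rfl | rfl
          · exact hu'M (hvsub f' hf' z' hz'')
          · exact hv'M (hvsub f' hf' z' hz'')
        rcases Finset.mem_insert.mp he' with rfl | he''
        · rcases Finset.mem_insert.mp hf with rfl | hf'
          · exact absurd rfl hef
          · exact hnew_old f hf' z hz
        · rcases Finset.mem_insert.mp hf with rfl | hf'
          · intro hz'
            exact hnew_old e' he'' z hz' hz
          · exact hMdisj e' he'' f hf' hef z hz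
    · push_neg at hnadj
      -- all pairs in Unc adjacent; counting argument
      have hAu : ∀ w : V, w ∈ Unc →
          (Finset.univ.filter (fun x => x ≠ w ∧ ¬ G.Adj w x)) ⊆ vertsM := by
        intro w hw x hx
        rw [Finset.mem_filter] at hx
        by_contra hxM
        have hxUnc : x ∈ Unc := Finset.mem_sdiff.mpr ⟨Finset.mem_univ _, hxM⟩
        exact hx.2.2 (hnadj w hw x hxUnc (fun h => hx.2.1 h.symm))
      have hAucard : ∀ w : V, Fintype.card V ≤
          (Finset.univ.filter (fun x => x ≠ w ∧ ¬ G.Adj w x)).card + 1 + G.maxDegree := by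
        intro w
        have hsub : Finset.univ ⊆
            (Finset.univ.filter (fun x => x ≠ w ∧ ¬ G.Adj w x)) ∪
              insert w (G.neighborFinset w) := by
          intro x _
          by_cases hxw : x = w
          · exact Finset.mem_union_right _ (Finset.mem_insert.mpr (Or.inl hxw))
          · by_cases hadj : G.Adj w x
            · exact Finset.mem_union_right _ (Finset.mem_insert.mpr
                (Or.inr ((SimpleGraph.mem_neighborFinset G w x).mpr hadj)))
            · exact Finset.mem_union_left _ (Finset.mem_filter.mpr
                ⟨Finset.mem_univ _, hxw, hadj⟩)
        calc Fintype.card V = Finset.univ.card := (Finset.card_univ).symm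
          _ ≤ ((Finset.univ.filter (fun x => x ≠ w ∧ ¬ G.Adj w x)) ∪
              insert w (G.neighborFinset w)).card := Finset.card_le_card hsub
          _ ≤ (Finset.univ.filter (fun x => x ≠ w ∧ ¬ G.Adj w x)).card +
              (insert w (G.neighborFinset w)).card := Finset.card_union_le _ _
          _ ≤ (Finset.univ.filter (fun x => x ≠ w ∧ ¬ G.Adj w x)).card +
              ((G.neighborFinset w).card + 1) := by
                have := Finset.card_insert_le w (G.neighborFinset w)
                omega
          _ ≤ _ := by
                have h1 : (G.neighborFinset w).card = G.degree w :=
                  G.card_neighborFinset_eq_degree w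
                have h2 := G.degree_le_maxDegree w
                omega
      set Au := Finset.univ.filter (fun x => x ≠ u ∧ ¬ G.Adj u x) with hAudef
      set Av := Finset.univ.filter (fun x => x ≠ v ∧ ¬ G.Adj v x) with hAvdef
      have hpart : ∀ s : Finset V, s ⊆ vertsM → s.card = ∑ e ∈ M, (s ∩ ({e.1, e.2} : Finset V)).card := by
        intro s hs
        have hbi : s = M.biUnion (fun e => s ∩ ({e.1, e.2} : Finset V)) := by
          ext z
          rw [Finset.mem_biUnion]
          constructor
          · intro hz
            have := hs hz
            rw [hvertsM, Finset.mem_biUnion] at this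
            obtain ⟨e, he, hze⟩ := this
            exact ⟨e, he, Finset.mem_inter.mpr ⟨hz, hze⟩⟩
          · rintro ⟨e, he, hze⟩
            exact (Finset.mem_inter.mp hze).1
        rw [← Finset.card_biUnion, ← hbi]
        intro e he f hf hef
        rw [Function.onFun, Finset.disjoint_left]
        intro z hz hz'
        exact hMdisj e he f hf hef z (Finset.mem_inter.mp hz).2 (Finset.mem_inter.mp hz').2
      have hAuv : Au.card + Av.card ≥ 2 * q + 2 := by
        have h1 := hAucard u
        have h2 := hAucard v
        rw [← hAudef] at h1
        rw [← hAvdef] at h2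
        omega
      have hex : ∃ e ∈ M, 3 ≤ (Au ∩ ({e.1, e.2} : Finset V)).card +
          (Av ∩ ({e.1, e.2} : Finset V)).card := by
        by_contra hno
        push_neg at hno
        have hsum : Au.card + Av.card =
            ∑ e ∈ M, ((Au ∩ ({e.1, e.2} : Finset V)).card +
              (Av ∩ ({e.1, e.2} : Finset V)).card) := by
          rw [Finset.sum_add_distrib, ← hpart Au (hAu u hu), ← hpart Av (hAu v hv)]
        have hle : ∑ e ∈ M, ((Au ∩ ({e.1, e.2} : Finset V)).card +
            (Av ∩ ({e.1, e.2} : Finset V)).card) ≤ ∑ _e ∈ M, 2 :=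
          Finset.sum_le_sum fun e he => by have := hno e he; omega
        rw [Finset.sum_const, hMcard, smul_eq_mul] at hle
        omega
      obtain ⟨e, he, h3⟩ := hex
      have hab : e.1 ≠ e.2 := (hMgood e he).1
      rw [card_inter_pair Au hab, card_inter_pair Av hab] at h3
      have hsubeq : ∀ z, z ∈ ({e.1, e.2} : Finset V) → z ∈ vertsM :=
        fun z hz => hvsub e he z hz
      have he1M : e.1 ∈ vertsM := hsubeq e.1 (by simp)
      have he2M : e.2 ∈ vertsM := hsubeq e.2 (by simp)
      have hpat : (e.1 ∈ Au ∧ e.2 ∈ Av) ∨ (e.2 ∈ Au ∧ e.1 ∈ Av) := by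
        by_cases p1 : e.1 ∈ Au <;> by_cases p2 : e.2 ∈ Au <;>
          by_cases p3 : e.1 ∈ Av <;> by_cases p4 : e.2 ∈ Av <;>
          simp only [p1, p2, p3, p4, if_true, if_false] at h3 <;> tauto
      have hAumem : ∀ z, z ∈ Au → z ≠ u ∧ ¬ G.Adj u z := by
        intro z hz
        rw [hAudef, Finset.mem_filter] at hz
        exact hz.2
      have hAvmem : ∀ z, z ∈ Av → z ≠ v ∧ ¬ G.Adj v z := by
        intro z hz
        rw [hAvdef, Finset.mem_filter] at hz
        exact hz.2
      rcases hpat with ⟨h1, h2⟩ | ⟨h1, h2⟩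
      · exact build e.1 e.2 (hAumem _ h1).1 (hAumem _ h1).2 (hAvmem _ h2).1 (hAvmem _ h2).2
          he1M he2M hab ⟨e, he, fun z hz => hz⟩
      · have hsw : ∀ z, z ∈ ({e.2, e.1} : Finset V) → z ∈ ({e.1, e.2} : Finset V) := by
          intro z hz
          simp only [Finset.mem_insert, Finset.mem_singleton] at hz ⊢
          tauto
        exact build e.2 e.1 (hAumem _ h1).1 (hAumem _ h1).2 (hAvmem _ h2).1 (hAvmem _ h2).2
          he2M he1M (Ne.symm hab) ⟨e, he, hsw⟩

theorem stmt16' {V : Type*} [Fintype V] [DecidableEq V] (G : SimpleGraph V) [DecidableRel G.Adj]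
    (hhigh : 2 * G.maxDegree < Fintype.card V)
    (P : Finset (Finset V)) (r s t : ℕ)
    (hcov : ∀ v : V, ∃! A, A ∈ P ∧ v ∈ A)
    (hind : ∀ A ∈ P, ∀ u ∈ A, ∀ w ∈ A, ¬ G.Adj u w)
    (hr : (P.filter (fun A => A.card = 3)).card = r)
    (hs : (P.filter (fun A => A.card = 2)).card = s)
    (ht : (P.filter (fun A => A.card = 1)).card = t)
    (hsizes : ∀ A ∈ P, A.card = 1 ∨ A.card = 2 ∨ A.card = 3)
    (k : ℕ) (hk : r + s + t ≤ k) :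
    ∃ C : V → Fin k, (∀ u v, G.Adj u v → C u ≠ C v) ∧
      ∀ i j : Fin k,
        (Finset.univ.filter fun v => C v = i).card ≤
          (Finset.univ.filter fun v => C v = j).card + 1 := by
  classical
  have hPcard : P.card = r + s + t := by
    have hsplit : P = ((P.filter (fun A => A.card = 1)) ∪ (P.filter (fun A => A.card = 2)))
        ∪ (P.filter (fun A => A.card = 3)) := by
      ext A
      simp only [Finset.mem_union, Finset.mem_filter]
      constructor
      · intro hA
        rcases hsizes A hA with h | h | h <;> tauto
      · rintro ((⟨h, -⟩ | ⟨h, -⟩) | ⟨h, -⟩) <;> exact h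
    have d1 : Disjoint (P.filter (fun A => A.card = 1)) (P.filter (fun A => A.card = 2)) := by
      rw [Finset.disjoint_left]
      intro A hA hB
      rw [Finset.mem_filter] at hA hB
      omega
    have d2 : Disjoint ((P.filter (fun A => A.card = 1)) ∪ (P.filter (fun A => A.card = 2)))
        (P.filter (fun A => A.card = 3)) := by
      rw [Finset.disjoint_left]
      intro A hA hB
      rw [Finset.mem_filter] at hB
      rcases Finset.mem_union.mp hA with h | h <;> rw [Finset.mem_filter] at h <;> omega
    have := Finset.card_union_of_disjoint d2
    have := Finset.card_union_of_disjoint d1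
    have hc : P.card = ((P.filter (fun A => A.card = 1)) ∪
        (P.filter (fun A => A.card = 2))).card + (P.filter (fun A => A.card = 3)).card := by
      rw [← Finset.card_union_of_disjoint d2, ← hsplit]
    omega
  by_cases hA1 : Fintype.card V ≤ k
  · -- all singletons
    obtain ⟨g, hp, hfib, -⟩ := partToColoring G (Finset.univ.image fun v => ({v} : Finset V))
      (by
        intro v
        refine ⟨{v}, ⟨Finset.mem_image_of_mem _ (Finset.mem_univ v),
          Finset.mem_singleton_self v⟩, ?_⟩
        rintro B ⟨hB, hvB⟩
        obtain ⟨w, -, rfl⟩ := Finset.mem_image.mp hB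
        rw [Finset.mem_singleton] at hvB
        rw [hvB])
      (by
        intro A hA u hu w hw
        obtain ⟨z, -, rfl⟩ := Finset.mem_image.mp hA
        rw [Finset.mem_singleton] at hu hw
        subst hu; subst hw
        exact G.loopless.irrefl _)
      (le_trans (Finset.card_image_le.trans (by rw [Finset.card_univ])) hA1)
    refine ⟨g, hp, fun i j => ?_⟩
    have h1 : (fibC g i).card ≤ 1 := by
      rcases hfib i with h | h
      · rw [h]; simp
      · obtain ⟨z, -, hz⟩ := Finset.mem_image.mp h
        rw [← hz]
        simp
    exact le_trans h1 (by omega)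
  · push_neg at hA1
    by_cases hA : Fintype.card V ≤ 2 * k
    · -- matching case
      have hΔk : G.maxDegree + 1 ≤ k := by omega
      obtain ⟨M, hMcard, hMgood, hMdisj⟩ := matchAux G hΔk hA (Fintype.card V - k) (by omega)
      set vertsM := M.biUnion (fun e => ({e.1, e.2} : Finset V)) with hvertsM
      have hvsub : ∀ e ∈ M, ∀ z, z ∈ ({e.1, e.2} : Finset V) → z ∈ vertsM := by
        intro e he z hz
        rw [hvertsM, Finset.mem_biUnion]
        exact ⟨e, he, hz⟩
      have hvcard : vertsM.card = 2 * (Fintype.card V - k) := by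
        rw [hvertsM, Finset.card_biUnion]
        · rw [Finset.sum_congr rfl (fun e he => Finset.card_pair (hMgood e he).1),
            Finset.sum_const, hMcard, smul_eq_mul, mul_comm]
        · intro e he f hf hef
          rw [Function.onFun, Finset.disjoint_left]
          intro z hz
          exact hMdisj e he f hf hef z hz
      set Pcl := M.image (fun e => ({e.1, e.2} : Finset V)) ∪
        (Finset.univ \ vertsM).image (fun v => ({v} : Finset V)) with hPcl
      have hmemPcl : ∀ A ∈ Pcl, A.card = 2 ∨ A.card = 1 := by
        intro A hA
        rcases Finset.mem_union.mp hA with h | h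
        · obtain ⟨e, he, rfl⟩ := Finset.mem_image.mp h
          exact Or.inl (Finset.card_pair (hMgood e he).1)
        · obtain ⟨z, -, rfl⟩ := Finset.mem_image.mp h
          exact Or.inr (Finset.card_singleton z)
      have hcov2 : ∀ v : V, ∃! A, A ∈ Pcl ∧ v ∈ A := by
        intro v
        by_cases hvM : v ∈ vertsM
        · rw [hvertsM, Finset.mem_biUnion] at hvM
          obtain ⟨e, he, hve⟩ := hvM
          refine ⟨{e.1, e.2}, ⟨Finset.mem_union_left _ (Finset.mem_image_of_mem _ he), hve⟩, ?_⟩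
          rintro B ⟨hB, hvB⟩
          rcases Finset.mem_union.mp hB with h | h
          · obtain ⟨f, hf, rfl⟩ := Finset.mem_image.mp h
            by_cases hef : f = e
            · rw [hef]
            · exact absurd hve (hMdisj f hf e he hef v hvB)
          · obtain ⟨z, hz, rfl⟩ := Finset.mem_image.mp h
            rw [Finset.mem_singleton] at hvB
            subst hvB
            exact absurd (hvsub e he v hve) (Finset.mem_sdiff.mp hz).2
        · refine ⟨{v}, ⟨Finset.mem_union_right _ (Finset.mem_image_of_mem _
            (Finset.mem_sdiff.mpr ⟨Finset.mem_univ _, hvM⟩)), Finset.mem_singleton_self v⟩, ?_⟩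
          rintro B ⟨hB, hvB⟩
          rcases Finset.mem_union.mp hB with h | h
          · obtain ⟨f, hf, rfl⟩ := Finset.mem_image.mp h
            exact absurd (hvsub f hf v hvB) hvM
          · obtain ⟨z, hz, rfl⟩ := Finset.mem_image.mp h
            rw [Finset.mem_singleton] at hvB
            rw [hvB]
      have hind2 : ∀ A ∈ Pcl, ∀ u ∈ A, ∀ w ∈ A, ¬ G.Adj u w := by
        intro A hA u hu w hw
        rcases Finset.mem_union.mp hA with h | h
        · obtain ⟨e, he, rfl⟩ := Finset.mem_image.mp h
          simp only [Finset.mem_insert, Finset.mem_singleton] at hu hw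
          rcases hu with rfl | rfl <;> rcases hw with rfl | rfl
          · exact G.loopless.irrefl _
          · exact (hMgood e he).2
          · exact fun hadj => (hMgood e he).2 hadj.symm
          · exact G.loopless.irrefl _
        · obtain ⟨z, -, rfl⟩ := Finset.mem_image.mp h
          rw [Finset.mem_singleton] at hu hw
          subst hu; subst hw
          exact G.loopless.irrefl _
      have hPclcard : Pcl.card = k := by
        have hdisj : Disjoint (M.image (fun e => ({e.1, e.2} : Finset V)))
            ((Finset.univ \ vertsM).image (fun v => ({v} : Finset V))) := by
          rw [Finset.disjoint_left]
          intro A hA hA'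
          obtain ⟨e, he, rfl⟩ := Finset.mem_image.mp hA
          obtain ⟨z, -, hz⟩ := Finset.mem_image.mp hA'
          have h2 : ({e.1, e.2} : Finset V).card = 2 := Finset.card_pair (hMgood e he).1
          rw [← hz] at h2
          simp at h2
        have hc1 : (M.image (fun e => ({e.1, e.2} : Finset V))).card = Fintype.card V - k := by
          rw [Finset.card_image_of_injOn, hMcard]
          intro e he f hf hef
          by_contra hne
          have hef' : ({e.1, e.2} : Finset V) = {f.1, f.2} := hef
          exact (hMdisj e he f hf hne e.1 (by simp) (by rw [← hef']; simp))
        have hc2 : ((Finset.univ \ vertsM).image (fun v => ({v} : Finset V))).card =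
            Fintype.card V - 2 * (Fintype.card V - k) := by
          rw [Finset.card_image_of_injective _ Finset.singleton_injective,
            Finset.card_sdiff_of_subset (Finset.subset_univ _), Finset.card_univ, hvcard]
        rw [hPcl, Finset.card_union_of_disjoint hdisj, hc1, hc2]
        omega
      obtain ⟨g, hp, hfib, hfull⟩ := partToColoring G Pcl hcov2 hind2 (le_of_eq hPclcard)
      -- every color used
      have hnoempty : ∀ c, fibC g c ∈ Pcl := by
        intro c
        choose cf hcf using hfull
        have hinj : Function.Injective (fun A : ↥Pcl => cf A.1 A.2) := by
          intro A B hAB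
          apply Subtype.ext
          simp only at hAB
          rw [← hcf A.1 A.2, ← hcf B.1 B.2, hAB]
        have hbij : Function.Bijective (fun A : ↥Pcl => cf A.1 A.2) :=
          (Fintype.bijective_iff_injective_and_card _).mpr
            ⟨hinj, by rw [Fintype.card_coe, hPclcard, Fintype.card_fin]⟩
        obtain ⟨A, hA⟩ := hbij.2 c
        simp only at hA
        have : fibC g c = A.1 := by rw [← hA]; exact hcf A.1 A.2
        rw [this]
        exact A.2
      refine ⟨g, hp, fun i j => ?_⟩
      have hi := hmemPcl _ (hnoempty i)
      have hj := hmemPcl _ (hnoempty j)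
      simp only [fibC] at hi hj
      omega
    · -- case B : 2k < n
      push_neg at hA
      have hkn : k < Fintype.card V := by omega
      obtain ⟨g0, hp0, hfib0, -⟩ := partToColoring (k := k) G P hcov hind (by omega)
      have hb0 : ∀ c, (fibC g0 c).card ≤ 3 := by
        intro c
        rcases hfib0 c with h | h
        · rw [h]; simp
        · rcases hsizes _ h with h' | h' | h' <;> omega
      obtain ⟨g', hp', heq⟩ := masterC hhigh hkn (PhiC g0) g0 hp0 hb0 le_rfl
      exact ⟨g', hp', heq⟩

theorem stmt16 [Fintype V] [DecidableEq V] (G : SimpleGraph V) [DecidableRel G.Adj]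
    (h6 : 6 ≤ Fintype.card V)
    (hlow : Fintype.card V + 1 ≤ 3 * G.maxDegree)
    (hhigh : 2 * G.maxDegree < Fintype.card V)
    (hcomp : ∀ K : G.ConnectedComponent,
      ¬ (K.supp.ncard = G.maxDegree + 1 ∧
         ∀ u ∈ K.supp, ∀ v ∈ K.supp, u ≠ v → G.Adj u v)) :
    ∀ (P : Finset (Finset V)) (r s t : ℕ), IsRST G P r s t →
      ∀ k : ℕ, r + s + t ≤ k → EqColorable G k := by
  intro P r s t hRST k hk
  obtain ⟨hcov, hind, hr, hs, ht, hsizes⟩ := hRST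
  exact stmt16' G hhigh P r s t hcov hind hr hs ht hsizes k hk
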